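/- In the setting of the optimization lemma (V ⊆ U, D(C) = ({X ∈ C} ∩ U) ∪ ({X ∉ C} ∩ V), ψ(C) = E[f(X)·1_{D(C)} + g(X)·1_{D(C)^c}], C* = {x ∈ E : f(x) − g(x) ≥ 0}), the maximal value equals ψ(C*) = E[(f(X) − g(X))^+ · 1_U] − E[(f(X) − g(X))^− · 1_V] + E[g(X)], where a^+ = max{a,0} and a^− = max{−a,0}. -/
import Mathlib


open MeasureTheory

/-- The effective stopping event of a player using stopping set `C`, when the other
players' declarations produce the events `U` and `V ⊆ U`:
`D(C) = ({X ∈ C} ∩ U) ∪ ({X ∉ C} ∩ V)`. -/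
def stopEvent {Ω E : Type*} (X : Ω → E) (U V : Set Ω) (C : Set E) : Set Ω :=
  (X ⁻¹' C ∩ U) ∪ ((X ⁻¹' C)ᶜ ∩ V)

/-- The expected payoff `ψ(C) = E[f(X)·1_{D(C)} + g(X)·1_{D(C)ᶜ}]`. -/
noncomputable def stopPayoff {Ω E : Type*} [MeasurableSpace Ω] (P : Measure Ω)
    (X : Ω → E) (f g : E → ℝ) (U V : Set Ω) (C : Set E) : ℝ :=
  ∫ ω, ((stopEvent X U V C).indicator (fun ω' => f (X ω')) ω +
        ((stopEvent X U V C)ᶜ).indicator (fun ω' => g (X ω')) ω) ∂P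

/-- In the setting of the optimization lemma, the maximal value equals
`ψ(C*) = E[(f(X) - g(X))⁺ · 1_U] - E[(f(X) - g(X))⁻ · 1_V] + E[g(X)]`, where
`a⁺ = max{a,0}`, `a⁻ = max{-a,0}` and `C* = {x : f(x) - g(x) ≥ 0}`. -/
theorem optimal_stopping_value {Ω E : Type*} [MeasurableSpace Ω] [MeasurableSpace E]
    (P : Measure Ω) [IsProbabilityMeasure P]
    (X : Ω → E) (hX : Measurable X)
    (f g : E → ℝ) (hf : Measurable f) (hg : Measurable g)
    (hfint : Integrable (fun ω => f (X ω)) P) (hgint : Integrable (fun ω => g (X ω)) P)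
    (U V : Set Ω) (hU : MeasurableSet U) (hV : MeasurableSet V) (hVU : V ⊆ U) :
    stopPayoff P X f g U V {x : E | 0 ≤ f x - g x} =
      (∫ ω in U, max (f (X ω) - g (X ω)) 0 ∂P) -
        (∫ ω in V, max (-(f (X ω) - g (X ω))) 0 ∂P) + ∫ ω, g (X ω) ∂P := by
  have hA : MeasurableSet {x : E | 0 ≤ f x - g x} :=
    measurableSet_le measurable_const (hf.sub hg)
  set A : Set Ω := X ⁻¹' {x : E | 0 ≤ f x - g x} with hA_def
  have hAm : MeasurableSet A := hX hA
  set h : Ω → ℝ := fun ω => f (X ω) - g (X ω) with hh_def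
  have hhint : Integrable h P := hfint.sub hgint
  set D : Set Ω := stopEvent X U V {x : E | 0 ≤ f x - g x} with hD_def
  have hDeq : D = (A ∩ U) ∪ (Aᶜ ∩ V) := rfl
  have hDm : MeasurableSet D := by
    rw [hDeq]; exact (hAm.inter hU).union (hAm.compl.inter hV)
  have key : ∀ ω, D.indicator (fun ω' => f (X ω')) ω + Dᶜ.indicator (fun ω' => g (X ω')) ω
      = D.indicator h ω + g (X ω) := by
    intro ω
    by_cases hω : ω ∈ D
    · rw [Set.indicator_of_mem hω, Set.indicator_of_mem hω,
        Set.indicator_of_notMem (by simpa using hω : ω ∉ Dᶜ)]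
      try simp [hh_def]
    · rw [Set.indicator_of_notMem hω, Set.indicator_of_notMem hω,
        Set.indicator_of_mem (by simpa using hω : ω ∈ Dᶜ)]
      try simp
  have h1 : stopPayoff P X f g U V {x : E | 0 ≤ f x - g x}
      = ∫ ω in D, h ω ∂P + ∫ ω, g (X ω) ∂P := by
    rw [stopPayoff]
    simp only [← hD_def, key]
    rw [integral_add (hhint.indicator hDm) hgint, integral_indicator hDm]
  rw [h1]
  have hmax1 : (fun ω => max (f (X ω) - g (X ω)) 0) = A.indicator h := by
    funext ω
    by_cases hω : ω ∈ A
    · rw [Set.indicator_of_mem hω]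
      exact max_eq_left (by simpa [hA_def] using hω)
    · rw [Set.indicator_of_notMem hω]
      exact max_eq_right (le_of_lt (by simpa [hA_def] using hω))
  have hmax2 : (fun ω => max (-(f (X ω) - g (X ω))) 0) = Aᶜ.indicator (fun ω => -h ω) := by
    funext ω
    by_cases hω : ω ∈ A
    · rw [Set.indicator_of_notMem (by simpa using hω)]
      exact max_eq_right (neg_nonpos.mpr (by simpa [hA_def] using hω))
    · rw [Set.indicator_of_mem (by simpa using hω)]
      exact max_eq_left (le_of_lt (neg_pos.mpr (by simpa [hA_def] using hω)))
  have e1 : ∫ ω in U, max (f (X ω) - g (X ω)) 0 ∂P = ∫ ω in A ∩ U, h ω ∂P := by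
    rw [show (∫ ω in U, max (f (X ω) - g (X ω)) 0 ∂P) = ∫ ω in U, A.indicator h ω ∂P by
      rw [← hmax1]]
    rw [setIntegral_indicator hAm, Set.inter_comm]
  have e2 : ∫ ω in V, max (-(f (X ω) - g (X ω))) 0 ∂P = - ∫ ω in Aᶜ ∩ V, h ω ∂P := by
    rw [show (∫ ω in V, max (-(f (X ω) - g (X ω))) 0 ∂P)
        = ∫ ω in V, Aᶜ.indicator (fun ω => -h ω) ω ∂P by rw [← hmax2]]
    rw [setIntegral_indicator hAm.compl, integral_neg, Set.inter_comm]
  have hdisj : Disjoint (A ∩ U) (Aᶜ ∩ V) :=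
    Disjoint.mono Set.inter_subset_left Set.inter_subset_left disjoint_compl_right
  have e3 : ∫ ω in D, h ω ∂P = ∫ ω in A ∩ U, h ω ∂P + ∫ ω in Aᶜ ∩ V, h ω ∂P := by
    rw [hDeq]
    exact setIntegral_union hdisj (hAm.compl.inter hV)
      (hhint.integrableOn) (hhint.integrableOn)
  rw [e1, e2, e3]
  ring
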